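/- Suppose 𝔴_α ≠ 0 for every α ∈ Γ, Per(φ) = Fix(φ), every point of Γ is a quasi-periodic point of φ, and σ_{φ,𝔴} : F^Γ → F^Γ is finite fibre. Then the map 𝔭 : sc(σ_{φ,𝔴}) → F^{Fix(φ)} defined by 𝔭(x) = x^{Fix(φ)} is bijective. -/

import Mathlib

open Function Set

/-- The weighted generalized shift `σ_{φ,𝔴} : F^Γ → F^Γ`,
`σ_{φ,𝔴}((x_α)_α) = (𝔴_α x_{φ(α)})_α`. The unweighted shift `σ_φ` is `wshift φ 1`. -/
def wshift {F : Type*} [Field F] {Γ : Type*} (φ : Γ → Γ) (w : Γ → F) :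
    (Γ → F) → (Γ → F) :=
  fun x α => w α * x (φ α)
/-- `f` is finite fibre if every fibre `f⁻¹(y)` is finite. -/
def FiniteFibre {A : Type*} (f : A → A) : Prop := ∀ y : A, (f ⁻¹' {y}).Finite
/-- `Per f`: the set of periodic points of `f`. -/
def PerSet {A : Type*} (f : A → A) : Set A := {x | ∃ n : ℕ, 1 ≤ n ∧ f^[n] x = x}

/-- `per x`: the period of a periodic point `x`. -/
noncomputable def perOf {A : Type*} (f : A → A) (x : A) : ℕ :=
  sInf {n : ℕ | 1 ≤ n ∧ f^[n] x = x}

/-- `x` is a quasi-periodic point of `f` if `f^n(x) = f^m(x)` for some `m > n ≥ 1`. -/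
def QuasiPeriodicPt {A : Type*} (f : A → A) (x : A) : Prop :=
  ∃ n m : ℕ, 1 ≤ n ∧ n < m ∧ f^[n] x = f^[m] x
/-- `Fix φ`: the set of fixed points of `φ`. -/
def FixS {Γ : Type*} (φ : Γ → Γ) : Set Γ := {α | φ α = α}

/-- The restriction `φ|Fix(φ) : Fix(φ) → Fix(φ)`. -/
def fixRes {Γ : Type*} (φ : Γ → Γ) : FixS φ → FixS φ :=
  fun a => ⟨φ a.1, by
    have h : φ a.1 = a.1 := a.2
    simp only [FixS, Set.mem_setOf_eq]
    simp [h]⟩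
/-- Surjective cover `sc(f) = ∩_{n≥1} f^n(A)`. -/
def scSet {A : Type*} (f : A → A) : Set A := {x | ∀ n : ℕ, 1 ≤ n → x ∈ Set.range f^[n]}

noncomputable def NN {Γ : Type*} (φ : Γ → Γ) (α : Γ) : ℕ :=
  sInf {n | φ (φ^[n] α) = φ^[n] α}

noncomputable def aa {Γ : Type*} (φ : Γ → Γ) (α : Γ) : Γ := φ^[NN φ α] α

section
variable {Γ : Type*} {φ : Γ → Γ}

lemma NN_le {α : Γ} {m : ℕ} (h : φ (φ^[m] α) = φ^[m] α) : NN φ α ≤ m := Nat.sInf_le h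

lemma NN_fixed {α : Γ} (h : φ α = α) : NN φ α = 0 :=
  Nat.le_zero.mp (NN_le (by simpa))

lemma aa_fixed {α : Γ} (h : φ α = α) : aa φ α = α := by
  simp [aa, NN_fixed h]

variable (hΦ : ∀ α : Γ, ∃ n, φ (φ^[n] α) = φ^[n] α)
include hΦ

lemma aa_fix (α : Γ) : φ (aa φ α) = aa φ α := Nat.sInf_mem (hΦ α)

lemma iter_ge {α : Γ} {n : ℕ} (h : NN φ α ≤ n) : φ^[n] α = aa φ α := by
  have h1 : n = (n - NN φ α) + NN φ α := by omega
  rw [h1, Function.iterate_add_apply]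
  exact Function.iterate_fixed (aa_fix hΦ α) _

lemma NN_iter_le {α : Γ} {n : ℕ} (h : n ≤ NN φ α) : NN φ (φ^[n] α) = NN φ α - n := by
  apply le_antisymm
  · apply NN_le
    have h1 : φ^[NN φ α - n] (φ^[n] α) = aa φ α := by
      rw [← Function.iterate_add_apply]
      have : NN φ α - n + n = NN φ α := by omega
      rw [this]; rfl
    rw [h1]
    exact aa_fix hΦ α
  · have h2 := aa_fix hΦ (φ^[n] α)
    have h3 : φ (φ^[NN φ (φ^[n] α) + n] α) = φ^[NN φ (φ^[n] α) + n] α := by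
      rw [Function.iterate_add_apply]
      exact h2
    have := NN_le h3
    omega

lemma aa_iter (α : Γ) (n : ℕ) : aa φ (φ^[n] α) = aa φ α := by
  rcases le_or_gt n (NN φ α) with h | h
  · show φ^[NN φ (φ^[n] α)] (φ^[n] α) = aa φ α
    rw [NN_iter_le hΦ h, ← Function.iterate_add_apply]
    show φ^[NN φ α - n + n] α = φ^[NN φ α] α
    congr 1
    omega
  · rw [iter_ge hΦ h.le]
    exact aa_fixed (aa_fix hΦ α)

end

section
variable {F : Type*} [Field F] {Γ : Type*} {φ : Γ → Γ} (w : Γ → F)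

lemma wshift_iterate (n : ℕ) (z : Γ → F) (α : Γ) :
    (wshift φ w)^[n] z α = (∏ i ∈ Finset.range n, w (φ^[i] α)) * z (φ^[n] α) := by
  induction n generalizing z α with
  | zero => simp
  | succ n ih =>
    rw [Function.iterate_succ_apply, ih, Finset.prod_range_succ,
      Function.iterate_succ_apply']
    show _ = _ * w (φ^[n] α) * (z (φ (φ^[n] α)))
    simp only [wshift]
    ring

lemma prod_split (α : Γ) (m n : ℕ) :
    ∏ i ∈ Finset.range (m + n), w (φ^[i] α)
      = (∏ i ∈ Finset.range m, w (φ^[i] α)) *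
        ∏ i ∈ Finset.range n, w (φ^[i] (φ^[m] α)) := by
  rw [Finset.prod_range_add]
  congr 1
  refine Finset.prod_congr rfl fun i _ => ?_
  rw [← Function.iterate_add_apply]
  congr 2
  omega

lemma prod_fixed {a : Γ} (h : φ a = a) (n : ℕ) :
    ∏ i ∈ Finset.range n, w (φ^[i] a) = (w a) ^ n := by
  have : ∀ i ∈ Finset.range n, w (φ^[i] a) = w a := fun i _ => by
    rw [Function.iterate_fixed h]
  rw [Finset.prod_congr rfl this, Finset.prod_const, Finset.card_range]

end

section
variable {F : Type*} [Field F] {Γ : Type*} {φ : Γ → Γ} {w : Γ → F}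
  (hw : ∀ α : Γ, w α ≠ 0) (hΦ : ∀ α : Γ, ∃ n, φ (φ^[n] α) = φ^[n] α)

/-- model function determined by values at eventual fixed points -/
noncomputable def gg (φ : Γ → Γ) (w : Γ → F) (y : Γ → F) (α : Γ) : F :=
  (∏ i ∈ Finset.range (NN φ α), w (φ^[i] α)) * y (aa φ α) * ((w (aa φ α))⁻¹) ^ (NN φ α)

include hw hΦ

lemma sc_formula {x : Γ → F} (hx : x ∈ scSet (wshift φ w)) (α : Γ) :
    x α = (∏ i ∈ Finset.range (NN φ α), w (φ^[i] α)) * x (aa φ α)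
      * ((w (aa φ α))⁻¹) ^ (NN φ α) := by
  by_cases hN : NN φ α = 0
  · have ha : aa φ α = α := by simp [aa, hN]
    simp [hN, ha]
  · obtain ⟨z, hz⟩ := hx (NN φ α) (Nat.one_le_iff_ne_zero.mpr hN)
    have h1 : x α = (∏ i ∈ Finset.range (NN φ α), w (φ^[i] α)) * z (aa φ α) := by
      rw [← hz, wshift_iterate]; rfl
    have h2 : x (aa φ α) = (w (aa φ α)) ^ (NN φ α) * z (aa φ α) := by
      rw [← hz, wshift_iterate, prod_fixed w (aa_fix hΦ α),
        Function.iterate_fixed (aa_fix hΦ α)]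
    have hwa : (w (aa φ α)) ^ (NN φ α) ≠ 0 := pow_ne_zero _ (hw _)
    rw [h1, h2, inv_pow]
    field_simp

lemma gg_identity (y : Γ → F) (α : Γ) (n : ℕ) :
    (∏ i ∈ Finset.range n, w (φ^[i] α)) * ((w (aa φ α))⁻¹) ^ n * gg φ w y (φ^[n] α)
      = gg φ w y α := by
  rcases le_or_gt n (NN φ α) with h | h
  · have hNb : NN φ (φ^[n] α) = NN φ α - n := NN_iter_le hΦ h
    have hab : aa φ (φ^[n] α) = aa φ α := aa_iter hΦ α n
    have hsplit : (∏ i ∈ Finset.range (NN φ α), w (φ^[i] α))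
        = (∏ i ∈ Finset.range n, w (φ^[i] α)) *
          ∏ i ∈ Finset.range (NN φ α - n), w (φ^[i] (φ^[n] α)) := by
      conv_lhs => rw [show NN φ α = n + (NN φ α - n) from by omega]
      rw [prod_split (φ := φ) w α n (NN φ α - n)]
    rw [gg, gg, hNb, hab, hsplit]
    have hp : ((w (aa φ α))⁻¹) ^ n * ((w (aa φ α))⁻¹) ^ (NN φ α - n)
        = ((w (aa φ α))⁻¹) ^ (NN φ α) := by
      rw [← pow_add]
      congr 1
      omega
    rw [← hp]
    ring
  · have hb : φ^[n] α = aa φ α := iter_ge hΦ h.le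
    have hga : gg φ w y (aa φ α) = y (aa φ α) := by
      rw [gg, NN_fixed (aa_fix hΦ α), aa_fixed (aa_fix hΦ α)]
      simp
    have hsplit : (∏ i ∈ Finset.range n, w (φ^[i] α))
        = (∏ i ∈ Finset.range (NN φ α), w (φ^[i] α)) * (w (aa φ α)) ^ (n - NN φ α) := by
      have h1 : n = NN φ α + (n - NN φ α) := by omega
      calc ∏ i ∈ Finset.range n, w (φ^[i] α)
          = ∏ i ∈ Finset.range (NN φ α + (n - NN φ α)), w (φ^[i] α) := by rw [← h1]
        _ = _ := by
            rw [prod_split (φ := φ) w α]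
            congr 1
            exact prod_fixed w (aa_fix hΦ α) _
    rw [hb, hga, gg, hsplit]
    have hwa : w (aa φ α) ≠ 0 := hw _
    have hpow : (w (aa φ α)) ^ (n - NN φ α) * ((w (aa φ α))⁻¹) ^ n
        = ((w (aa φ α))⁻¹) ^ (NN φ α) := by
      obtain ⟨k, hk⟩ : ∃ k, n = k + NN φ α := ⟨n - NN φ α, by omega⟩
      subst hk
      rw [Nat.add_sub_cancel, pow_add, ← mul_assoc, ← mul_pow, mul_inv_cancel₀ hwa, one_pow,
        one_mul]
    calc (∏ i ∈ Finset.range (NN φ α), w (φ^[i] α)) * (w (aa φ α)) ^ (n - NN φ α)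
        * ((w (aa φ α))⁻¹) ^ n * y (aa φ α)
        = (∏ i ∈ Finset.range (NN φ α), w (φ^[i] α))
          * ((w (aa φ α)) ^ (n - NN φ α) * ((w (aa φ α))⁻¹) ^ n) * y (aa φ α) := by ring
      _ = _ := by rw [hpow]; ring

end

/-- If `𝔴` is nowhere zero, `Per(φ) = Fix(φ)`, every point of `Γ` is quasi-periodic for
`φ`, and `σ_{φ,𝔴}` is finite fibre, then `𝔭 : sc(σ_{φ,𝔴}) → F^{Fix(φ)}`,
`𝔭(x) = x^{Fix(φ)}`, is bijective. -/
theorem stmt_13 {F : Type*} [Field F] [Fintype F] {Γ : Type*} [Nonempty Γ]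
    (φ : Γ → Γ) (w : Γ → F) (hw : ∀ α : Γ, w α ≠ 0)
    (hper : PerSet φ = FixS φ)
    (hqp : ∀ α : Γ, QuasiPeriodicPt φ α)
    (hff : FiniteFibre (wshift φ w)) :
    Function.Bijective
      (fun (x : scSet (wshift φ w)) => (fun (a : FixS φ) => x.1 a.1)) := by
  have hΦ : ∀ α : Γ, ∃ n, φ (φ^[n] α) = φ^[n] α := by
    intro α
    obtain ⟨n, m, hn, hnm, heq⟩ := hqp α
    have hp : φ^[n] α ∈ PerSet φ := by
      refine ⟨m - n, by omega, ?_⟩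
      rw [← Function.iterate_add_apply]
      have h1 : m - n + n = m := by omega
      rw [h1, ← heq]
    rw [hper] at hp
    exact ⟨n, hp⟩
  constructor
  · intro x x' h
    apply Subtype.ext
    funext α
    rw [sc_formula hw hΦ x.2 α, sc_formula hw hΦ x'.2 α]
    have := congrFun h ⟨aa φ α, aa_fix hΦ α⟩
    simp only at this
    rw [this]
  · intro y
    set Y : Γ → F := fun β => y ⟨aa φ β, aa_fix hΦ β⟩ with hY
    have hxsc : gg φ w Y ∈ scSet (wshift φ w) := by
      intro n hn
      refine ⟨fun β => ((w (aa φ β))⁻¹) ^ n * gg φ w Y β, ?_⟩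
      funext α
      rw [wshift_iterate]
      rw [aa_iter hΦ α n, ← mul_assoc]
      exact gg_identity hw hΦ Y α n
    refine ⟨⟨gg φ w Y, hxsc⟩, ?_⟩
    funext a
    simp only
    rw [gg, NN_fixed a.2, aa_fixed a.2]
    simp only [hY, Finset.range_zero, Finset.prod_empty, pow_zero, one_mul, mul_one]
    congr 1
    exact Subtype.ext (aa_fixed a.2)
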